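/- Let f be Lipschitz on a compact metric measure space (M,d,μ) (μ a probability measure) with ∫ f^q dμ = 1, f > 0, and assume the log-Sobolev inequality ∫ ρ log ρ dμ ≤ (1/(2K))·(∫ |D⁻ρ|^q/ρ^{q−1} dμ)^{2/q} holds for all positive Lipschitz probability densities ρ. Then (∫ f^q log f^q dμ)^{1/2} ≤ (q/√(2K))·(∫ |D⁻f|^q dμ)^{1/q}. -/

import Mathlib

open MeasureTheory Filter Topology

/-- The descending slope `|D⁻f|(x) = limsup_{y→x} [f(x)-f(y)]₊ / d(y,x)`. -/
noncomputable def descSlope {M : Type*} [MetricSpace M] (f : M → ℝ) (x : M) : ℝ :=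
  Filter.limsup (fun y => max (f x - f y) 0 / dist y x) (𝓝[≠] x)

lemma limsup_bot_real {α : Type*} (g : α → ℝ) : Filter.limsup g (⊥ : Filter α) = 0 := by
  rw [Filter.limsup_eq]
  have h : {a : ℝ | ∀ᶠ n in (⊥ : Filter α), g n ≤ a} = Set.univ := by simp
  rw [h]
  apply Real.sInf_of_not_bddBelow
  rintro ⟨b, hb⟩
  have := hb (Set.mem_univ (b - 1))
  linarith

lemma rpow_mvt {q : ℝ} (hq : 1 < q) {a b : ℝ} (hb : 0 < b) (hba : b < a) :
    q * b ^ (q - 1) * (a - b) ≤ a ^ q - b ^ q ∧ a ^ q - b ^ q ≤ q * a ^ (q - 1) * (a - b) := by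
  have hcont : ContinuousOn (fun t : ℝ => t ^ q) (Set.Icc b a) := fun t _ =>
    (Real.continuousAt_rpow_const t q (Or.inr (by linarith))).continuousWithinAt
  have hderiv : ∀ t ∈ Set.Ioo b a, HasDerivAt (fun t : ℝ => t ^ q) (q * t ^ (q - 1)) t :=
    fun t _ => Real.hasDerivAt_rpow_const (Or.inr hq.le)
  obtain ⟨c, hc, hc'⟩ := exists_hasDerivAt_eq_slope (fun t : ℝ => t ^ q)
    (fun t => q * t ^ (q - 1)) hba hcont hderiv
  have hab : (0:ℝ) < a - b := by linarith
  have h1 : a ^ q - b ^ q = q * c ^ (q - 1) * (a - b) := by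
    rw [hc', div_mul_cancel₀ _ hab.ne']
  have hcb : b ^ (q - 1) ≤ c ^ (q - 1) := Real.rpow_le_rpow hb.le hc.1.le (by linarith)
  have hca : c ^ (q - 1) ≤ a ^ (q - 1) :=
    Real.rpow_le_rpow (by linarith [hc.1]) hc.2.le (by linarith)
  have hq0 : (0:ℝ) ≤ q := by linarith
  constructor
  · rw [h1]
    exact mul_le_mul_of_nonneg_right (mul_le_mul_of_nonneg_left hcb hq0) hab.le
  · rw [h1]
    exact mul_le_mul_of_nonneg_right (mul_le_mul_of_nonneg_left hca hq0) hab.le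

section Slope

variable {M : Type*} [MetricSpace M] {f : M → ℝ} {C : NNReal}

lemma slope_le_lip (hf : LipschitzWith C f) (x : M) :
    ∀ y ∈ ({x}ᶜ : Set M), max (f x - f y) 0 / dist y x ≤ (C : ℝ) := by
  intro y hy
  have hd : 0 < dist y x := dist_pos.2 hy
  rw [div_le_iff₀ hd]
  have h1 : f x - f y ≤ |f x - f y| := le_abs_self _
  have h2 : |f x - f y| = dist (f x) (f y) := (Real.dist_eq _ _).symm
  have h3 : dist (f x) (f y) ≤ C * dist x y := hf.dist_le_mul x y
  rw [dist_comm x y] at h3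
  have hC : (0:ℝ) ≤ C * dist y x := by positivity
  exact max_le (by linarith) hC

lemma descSlope_nonneg (hf : LipschitzWith C f) (x : M) : 0 ≤ descSlope f x := by
  rcases (𝓝[≠] x).eq_or_neBot with hbot | hne
  · unfold descSlope; rw [hbot, limsup_bot_real]
  · refine le_limsup_of_frequently_le (Frequently.of_forall fun y => by positivity) ?_
    exact ⟨C, eventually_nhdsWithin_of_forall (slope_le_lip hf x)⟩

lemma descSlope_rpow (hf : LipschitzWith C f) (hpos : ∀ x, 0 < f x) {q : ℝ} (hq : 1 < q)
    (x : M) :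
    descSlope (fun y => f y ^ q) x = q * f x ^ (q - 1) * descSlope f x := by
  set L : ℝ := q * f x ^ (q - 1) with hLdef
  have hLpos : 0 < L := by
    have := hpos x; positivity
  rcases (𝓝[≠] x).eq_or_neBot with hbot | hne
  · unfold descSlope; rw [hbot, limsup_bot_real, limsup_bot_real, mul_zero]
  · set h : M → ℝ := fun y => max (f x - f y) 0 / dist y x with hh
    set u : M → ℝ := fun y => max (f x ^ q - f y ^ q) 0 / dist y x with hu
    have hh0 : ∀ y, 0 ≤ h y := fun y => by positivity
    have hu0 : ∀ y, 0 ≤ u y := fun y => by positivity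
    -- pointwise upper bound : u ≤ L * h on {x}ᶜ
    have hpt : ∀ y ∈ ({x}ᶜ : Set M), u y ≤ L * h y := by
      intro y hy
      have hd : 0 < dist y x := dist_pos.2 hy
      rcases le_or_gt (f x) (f y) with hle | hlt
      · have h1 : f x ^ q - f y ^ q ≤ 0 := by
          have := Real.rpow_le_rpow (hpos x).le hle (by linarith : (0:ℝ) ≤ q)
          linarith
        have : u y = 0 := by
          simp only [hu, max_eq_right h1, zero_div]
        rw [this]
        exact mul_nonneg hLpos.le (hh0 y)
      · have hm := (rpow_mvt hq (hpos y) hlt).2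
        rw [← hLdef] at hm
        have hmax1 : max (f x - f y) 0 = f x - f y := max_eq_left (by linarith)
        have key : max (f x ^ q - f y ^ q) 0 ≤ L * max (f x - f y) 0 := by
          rw [hmax1]
          exact max_le (by linarith) (mul_nonneg hLpos.le (by linarith))
        calc u y ≤ (L * max (f x - f y) 0) / dist y x := (div_le_div_iff_of_pos_right hd).2 key
             _ = L * h y := by rw [hh]; ring
    have hbddh : IsBoundedUnder (· ≤ ·) (𝓝[≠] x) h :=
      ⟨C, eventually_nhdsWithin_of_forall (slope_le_lip hf x)⟩
    have hbddu : IsBoundedUnder (· ≤ ·) (𝓝[≠] x) u := by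
      refine ⟨L * C, eventually_nhdsWithin_of_forall fun y hy => ?_⟩
      exact (hpt y hy).trans (mul_le_mul_of_nonneg_left (slope_le_lip hf x y hy) hLpos.le)
    have hcobh : IsCoboundedUnder (· ≤ ·) (𝓝[≠] x) h :=
      isCoboundedUnder_le_of_le _ hh0
    have hcobu : IsCoboundedUnder (· ≤ ·) (𝓝[≠] x) u :=
      isCoboundedUnder_le_of_le _ hu0
    have hs0 : 0 ≤ descSlope f x := descSlope_nonneg hf x
    have hsdef : descSlope f x = limsup h (𝓝[≠] x) := rfl
    show limsup u (𝓝[≠] x) = L * descSlope f x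
    apply le_antisymm
    · refine le_of_forall_pos_le_add fun ε hε => ?_
      have hεL : 0 < ε / L := div_pos hε hLpos
      have hltC : limsup h (𝓝[≠] x) < descSlope f x + ε / L := by
        rw [← hsdef]; linarith
      have hev := eventually_lt_of_limsup_lt hltC hbddh
      refine limsup_le_of_le hcobu ?_
      filter_upwards [hev, self_mem_nhdsWithin] with y hy1 hy2
      calc u y ≤ L * h y := hpt y hy2
        _ ≤ L * (descSlope f x + ε / L) := mul_le_mul_of_nonneg_left hy1.le hLpos.le
        _ = L * descSlope f x + ε := by field_simp
    · have key : ∀ ε : ℝ, 0 < ε → ε < L → (L - ε) * descSlope f x ≤ limsup u (𝓝[≠] x) := by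
        intro ε hε hεL
        have hLε : 0 < L - ε := by linarith
        have hcont : Tendsto (fun y => q * f y ^ (q - 1)) (𝓝 x) (𝓝 L) := by
          have h1 : ContinuousAt (fun t : ℝ => q * t ^ (q - 1)) (f x) :=
            continuousAt_const.mul (Real.continuousAt_rpow_const _ _ (Or.inl (hpos x).ne'))
          exact h1.comp hf.continuous.continuousAt
        have hev1 : ∀ᶠ y in 𝓝 x, L - ε < q * f y ^ (q - 1) :=
          hcont.eventually (eventually_gt_nhds (by linarith))
        have hev2 : ∀ᶠ y in 𝓝[≠] x, (L - ε) * h y ≤ u y := by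
          filter_upwards [hev1.filter_mono nhdsWithin_le_nhds, self_mem_nhdsWithin]
            with y hy1 hy2
          have hd : 0 < dist y x := dist_pos.2 hy2
          rcases le_or_gt (f x) (f y) with hle | hlt
          · have hz : h y = 0 := by
              simp only [hh, max_eq_right (by linarith : f x - f y ≤ 0), zero_div]
            rw [hz, mul_zero]; exact hu0 y
          · have hm := (rpow_mvt hq (hpos y) hlt).1
            have hfy1 : 0 < f y ^ (q - 1) := Real.rpow_pos_of_pos (hpos y) _
            have hmaxf : max (f x - f y) 0 = f x - f y := max_eq_left (by linarith)
            have hmaxq : max (f x ^ q - f y ^ q) 0 = f x ^ q - f y ^ q := by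
              apply max_eq_left
              nlinarith [hm, hfy1]
            have h3 : (L - ε) * (f x - f y) ≤ f x ^ q - f y ^ q := by nlinarith [hy1, hm]
            simp only [hh, hu, hmaxf, hmaxq]
            rw [mul_div_assoc']
            exact (div_le_div_iff_of_pos_right hd).2 h3
        by_contra hcon
        push_neg at hcon
        obtain ⟨c, hc1, hc2⟩ := exists_between hcon
        have hevu := eventually_lt_of_limsup_lt hc1 hbddu
        have hlh : limsup h (𝓝[≠] x) ≤ c / (L - ε) := by
          refine limsup_le_of_le hcobh ?_
          filter_upwards [hev2, hevu] with y h1 h2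
          rw [le_div_iff₀' hLε]
          linarith
        have hfin : descSlope f x < descSlope f x := by
          calc descSlope f x = limsup h (𝓝[≠] x) := hsdef
            _ ≤ c / (L - ε) := hlh
            _ < descSlope f x := by rw [div_lt_iff₀' hLε]; linarith
        exact absurd hfin (lt_irrefl _)
      rcases eq_or_lt_of_le hs0 with hs | hs
      · rw [← hs, mul_zero]
        exact le_limsup_of_frequently_le (Frequently.of_forall fun y => hu0 y) hbddu
      · refine le_of_forall_pos_le_add fun ε hε => ?_
        set δ := min (ε / descSlope f x) (L / 2) with hδ
        have hδ0 : 0 < δ := lt_min (div_pos hε hs) (by linarith)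
        have hδL : δ < L := lt_of_le_of_lt (min_le_right _ _) (by linarith)
        have h1 := key δ hδ0 hδL
        have h2 : δ * descSlope f x ≤ ε := by
          have hm := min_le_left (ε / descSlope f x) (L / 2)
          calc δ * descSlope f x ≤ (ε / descSlope f x) * descSlope f x :=
                mul_le_mul_of_nonneg_right hm hs0
            _ = ε := by field_simp
        nlinarith [h1, h2]

end Slope

theorem stmt16 {M : Type*} [MetricSpace M] [CompactSpace M]
    [MeasurableSpace M] [BorelSpace M]
    (μ : Measure M) [IsProbabilityMeasure μ]
    (K q : ℝ) (hK : 0 < K) (hq : 1 < q)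
    (hls : ∀ ρ : M → ℝ, (∃ C : NNReal, LipschitzWith C ρ) → (∀ x, 0 < ρ x) →
      (∫ x, ρ x ∂μ) = 1 →
      ∫ x, ρ x * Real.log (ρ x) ∂μ ≤
        (1 / (2 * K)) * (∫ x, descSlope ρ x ^ q / ρ x ^ (q - 1) ∂μ) ^ (2 / q))
    (f : M → ℝ) (hLip : ∃ C : NNReal, LipschitzWith C f)
    (hpos : ∀ x, 0 < f x) (hnorm : (∫ x, f x ^ q ∂μ) = 1) :
    (∫ x, f x ^ q * Real.log (f x ^ q) ∂μ) ^ ((1:ℝ)/2) ≤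
      (q / Real.sqrt (2 * K)) * (∫ x, descSlope f x ^ q ∂μ) ^ ((1:ℝ)/q) := by
  obtain ⟨C, hf⟩ := hLip
  have hq0 : (0:ℝ) < q := by linarith
  have hMne : Nonempty M := by
    by_contra hcon
    rw [not_nonempty_iff] at hcon
    have h0 : μ Set.univ = 0 := by
      rw [Set.univ_eq_empty_iff.2 hcon, measure_empty]
    rw [measure_univ] at h0
    exact one_ne_zero h0
  obtain ⟨z, -, hz'⟩ := isCompact_univ.exists_isMaxOn Set.univ_nonempty hf.continuous.continuousOn
  have hz : ∀ y, f y ≤ f z := fun y => hz' (Set.mem_univ y)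
  set B : ℝ := f z with hB
  have hB0 : 0 < B := hpos z
  set ρ : M → ℝ := fun y => f y ^ q with hρ
  -- Lipschitz bound for ρ
  have hρkey : ∀ a b : M, f b ≤ f a → dist (ρ a) (ρ b) ≤ q * B ^ (q - 1) * (C : ℝ) * dist a b := by
    intro a b hba
    rcases eq_or_lt_of_le hba with heq | hlt
    · have : ρ a = ρ b := by simp only [hρ, heq]
      rw [this, dist_self]; positivity
    · have hm := (rpow_mvt hq (hpos b) hlt).2
      have hfa : f a ^ (q - 1) ≤ B ^ (q - 1) :=
        Real.rpow_le_rpow (hpos a).le (hz a) (by linarith)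
      have hd : f a - f b ≤ (C : ℝ) * dist a b := by
        have := hf.dist_le_mul a b
        rw [Real.dist_eq] at this
        calc f a - f b ≤ |f a - f b| := le_abs_self _
          _ ≤ (C : ℝ) * dist a b := this
      have hρab : ρ a - ρ b = f a ^ q - f b ^ q := rfl
      have hml := (rpow_mvt hq (hpos b) hlt).1
      have hfb1 : (0:ℝ) < f b ^ (q - 1) := Real.rpow_pos_of_pos (hpos b) _
      have hpos' : 0 ≤ f a ^ q - f b ^ q := by
        nlinarith [mul_pos (mul_pos hq0 hfb1) (by linarith : (0:ℝ) < f a - f b)]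
      rw [Real.dist_eq, hρab, abs_of_nonneg hpos']
      have h1 : f a ^ q - f b ^ q ≤ q * B ^ (q-1) * (f a - f b) := by
        nlinarith [mul_le_mul_of_nonneg_right (mul_le_mul_of_nonneg_left hfa hq0.le)
          (by linarith : (0:ℝ) ≤ f a - f b)]
      calc f a ^ q - f b ^ q ≤ q * B ^ (q-1) * (f a - f b) := h1
        _ ≤ q * B ^ (q-1) * ((C : ℝ) * dist a b) := by
            apply mul_le_mul_of_nonneg_left hd; positivity
        _ = q * B ^ (q-1) * (C : ℝ) * dist a b := by ring
  have hρLip : LipschitzWith (⟨q * B ^ (q - 1), by positivity⟩ * C) ρ := by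
    apply LipschitzWith.of_dist_le_mul
    intro a b
    have hco : ((⟨q * B ^ (q - 1), by positivity⟩ * C : NNReal) : ℝ) = q * B ^ (q-1) * (C:ℝ) := by
      exact NNReal.coe_mul _ _
    rw [hco]
    rcases le_total (f b) (f a) with hab | hab
    · exact hρkey a b hab
    · rw [dist_comm, dist_comm a b]; exact hρkey b a hab
  have hρpos : ∀ x, 0 < ρ x := fun x => Real.rpow_pos_of_pos (hpos x) q
  have hE := hls ρ ⟨_, hρLip⟩ hρpos hnorm
  set I : ℝ := ∫ x, descSlope f x ^ q ∂μ with hI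
  have hI0 : 0 ≤ I :=
    integral_nonneg fun y => Real.rpow_nonneg (descSlope_nonneg hf y) q
  have hint : (∫ x, descSlope ρ x ^ q / ρ x ^ (q - 1) ∂μ) = q ^ q * I := by
    have hptwise : ∀ y, descSlope ρ y ^ q / ρ y ^ (q - 1) = q ^ q * descSlope f y ^ q := by
      intro y
      have hs0 := descSlope_nonneg hf y
      have hfy := hpos y
      have hstep : descSlope ρ y = q * f y ^ (q - 1) * descSlope f y :=
        descSlope_rpow hf hpos hq y
      rw [hstep]
      have hfq1 : (0:ℝ) ≤ f y ^ (q - 1) := by positivity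
      rw [Real.mul_rpow (by positivity) hs0, Real.mul_rpow hq0.le hfq1,
        ← Real.rpow_mul hfy.le]
      have hρy : ρ y ^ (q - 1) = f y ^ (q * (q - 1)) := by
        rw [hρ, ← Real.rpow_mul hfy.le]
      rw [hρy, mul_comm (q-1) q]
      have hne : f y ^ (q * (q - 1)) ≠ 0 := (Real.rpow_pos_of_pos hfy _).ne'
      field_simp
    calc (∫ x, descSlope ρ x ^ q / ρ x ^ (q - 1) ∂μ)
        = ∫ x, q ^ q * descSlope f x ^ q ∂μ :=
          integral_congr_ae (Filter.Eventually.of_forall hptwise)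
      _ = q ^ q * I := integral_const_mul _ _
  rw [hint] at hE
  -- final algebra
  rw [← Real.sqrt_eq_rpow]
  have h2K : (0:ℝ) < 2 * K := by linarith
  have hqq : (0:ℝ) ≤ q ^ q := Real.rpow_nonneg hq0.le q
  calc Real.sqrt (∫ x, f x ^ q * Real.log (f x ^ q) ∂μ)
      ≤ Real.sqrt ((1 / (2 * K)) * (q ^ q * I) ^ (2 / q)) := Real.sqrt_le_sqrt hE
    _ = (q / Real.sqrt (2 * K)) * I ^ ((1:ℝ)/q) := by
        rw [Real.mul_rpow hqq hI0, ← Real.rpow_mul hq0.le]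
        have he : q * (2 / q) = 2 := by field_simp
        rw [he]
        rw [Real.sqrt_mul (by positivity), Real.sqrt_mul (by positivity)]
        have h1 : Real.sqrt (q ^ (2:ℝ)) = q := by
          rw [Real.sqrt_eq_rpow, ← Real.rpow_mul hq0.le]
          norm_num
        have h2 : Real.sqrt (I ^ (2 / q)) = I ^ ((1:ℝ)/q) := by
          rw [Real.sqrt_eq_rpow, ← Real.rpow_mul hI0]
          congr 1
          ring
        have h3 : Real.sqrt (1 / (2 * K)) = 1 / Real.sqrt (2 * K) := by
          rw [one_div, one_div, Real.sqrt_inv]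
        rw [h1, h2, h3]
        have hsK : 0 < Real.sqrt (2 * K) := Real.sqrt_pos.2 h2K
        field_simp
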